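/- arXiv:1401.2794 — 2 statements merged into one kernel-verified Lean document; each statement's English description precedes it below -/
import Mathlib

section
/- Let C be an [n,k] code over F_p and G a generator matrix in standard form with rows g_i = e_i − m_i (so m_i is supported in coordinates k+1,…,n). Then the set {x_i − x^{m_i} : 1 ≤ i ≤ k} ∪ {x_i^p − 1 : k+1 ≤ i ≤ n} generates the code ideal I(C) and is the reduced Gröbner basis of I(C) with respect to the lexicographic order x_1 ≻ x_2 ≻ … ≻ x_n. -/
open MvPolynomial

/-- Exponent vector in ℕ^n of a word over F_p, entries read in {0,…,p−1}. -/
noncomputable def toExp {p n : ℕ} (c : Fin n → ZMod p) : Fin n →₀ ℕ :=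
  Finsupp.equivFunOnFinite.symm fun i => (c i).val

/-- The code ideal I(C) = ⟨x^a − x^b : a − b ∈ C⟩ + ⟨x_i^p − 1⟩. -/
noncomputable def codeIdeal (p : ℕ) (K : Type*) [Field K] {n : ℕ}
    (C : Submodule (ZMod p) (Fin n → ZMod p)) : Ideal (MvPolynomial (Fin n) K) :=
  Ideal.span
    ({f | ∃ a b : Fin n → ZMod p, a - b ∈ C ∧
        f = monomial (toExp a) (1 : K) - monomial (toExp b) 1} ∪
     {f | ∃ i : Fin n, f = X i ^ p - 1})

/-- `d` is the leading exponent of `f` w.r.t. the monomial order `le`. -/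
def IsLeadExp {σ K : Type*} [CommSemiring K] (le : (σ →₀ ℕ) → (σ →₀ ℕ) → Prop)
    (f : MvPolynomial σ K) (d : σ →₀ ℕ) : Prop :=
  d ∈ f.support ∧ ∀ e ∈ f.support, le e d

/-- Leading ideal of `I` w.r.t. the monomial order `le`. -/
noncomputable def leadIdeal {σ K : Type*} [CommSemiring K]
    (le : (σ →₀ ℕ) → (σ →₀ ℕ) → Prop) (I : Ideal (MvPolynomial σ K)) :
    Ideal (MvPolynomial σ K) :=
  Ideal.span {q | ∃ f ∈ I, ∃ d, IsLeadExp le f d ∧ q = monomial d (1 : K)}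

/-- `G` is a Gröbner basis of `I`: G ⊆ I and the leading terms of G generate the
leading ideal of I. -/
def IsGroebnerBasis {σ K : Type*} [CommSemiring K]
    (le : (σ →₀ ℕ) → (σ →₀ ℕ) → Prop) (G : Set (MvPolynomial σ K))
    (I : Ideal (MvPolynomial σ K)) : Prop :=
  G ⊆ (I : Set (MvPolynomial σ K)) ∧
    leadIdeal le I = Ideal.span {q | ∃ g ∈ G, ∃ d, IsLeadExp le g d ∧ q = monomial d (1 : K)}

/-- `G` is the reduced Gröbner basis of `I`: a Gröbner basis, all elements monic,
and no term of any element is divisible by the leading term of another element. -/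
def IsReducedGroebnerBasis {σ K : Type*} [CommSemiring K]
    (le : (σ →₀ ℕ) → (σ →₀ ℕ) → Prop) (G : Set (MvPolynomial σ K))
    (I : Ideal (MvPolynomial σ K)) : Prop :=
  IsGroebnerBasis le G I ∧
    (∀ g ∈ G, ∀ d, IsLeadExp le g d → MvPolynomial.coeff d g = 1) ∧
    (∀ g ∈ G, ∀ h ∈ G, g ≠ h → ∀ d, IsLeadExp le g d → ∀ e ∈ h.support, ¬ d ≤ e)

/-- The lexicographic monomial order with x_1 ≻ x_2 ≻ … ≻ x_n. -/
def lexLe {n : ℕ} (a b : Fin n →₀ ℕ) : Prop := toLex a ≤ toLex b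

section AuxST4

variable {p n k : ℕ}

lemma toExp_apply (c : Fin n → ZMod p) (j : Fin n) : toExp c j = (c j).val := rfl

lemma st4_lex_lt {a b : Fin n →₀ ℕ} (j : Fin n) (h1 : ∀ d < j, a d = b d) (h2 : a j < b j) :
    toLex a < toLex b := Finsupp.lex_def.2 ⟨j, h1, h2⟩

/-- image of a variable in the group algebra -/
noncomputable def st4psi (p : ℕ) {n : ℕ} (k : ℕ) (M : Fin k → Fin n → ZMod p) (j : Fin n) :
    Fin n → ZMod p :=
  if h : (j : ℕ) < k then M ⟨j, h⟩ else Pi.single j 1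

/-- image of an exponent vector in the group -/
noncomputable def st4v (p : ℕ) {n : ℕ} (k : ℕ) (M : Fin k → Fin n → ZMod p)
    (e : Fin n →₀ ℕ) : Fin n → ZMod p :=
  ∑ t : Fin n, e t • st4psi p k M t

variable {M : Fin k → Fin n → ZMod p}

lemma st4psi_head (hM : ∀ (i : Fin k) (j : Fin n), (j : ℕ) < k → M i j = 0)
    (t j : Fin n) (hj : (j : ℕ) < k) : st4psi p k M t j = 0 := by
  unfold st4psi
  split_ifs with h
  · exact hM _ _ hj
  · have ht : t ≠ j := fun hc => h (hc ▸ hj)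
    exact Pi.single_eq_of_ne (Ne.symm ht) 1

lemma st4v_add (a b : Fin n →₀ ℕ) :
    st4v p k M (a + b) = st4v p k M a + st4v p k M b := by
  unfold st4v
  rw [← Finset.sum_add_distrib]
  refine Finset.sum_congr rfl fun t _ => ?_
  rw [Finsupp.add_apply, add_smul]

lemma st4v_single (i : Fin n) (m : ℕ) :
    st4v p k M (Finsupp.single i m) = m • st4psi p k M i := by
  unfold st4v
  rw [Finset.sum_eq_single i]
  · rw [Finsupp.single_eq_same]
  · intro t _ ht
    rw [Finsupp.single_eq_of_ne' (Ne.symm ht), zero_smul]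
  · intro h; exact absurd (Finset.mem_univ i) h

lemma st4v_head (hM : ∀ (i : Fin k) (j : Fin n), (j : ℕ) < k → M i j = 0)
    (e : Fin n →₀ ℕ) (j : Fin n) (hj : (j : ℕ) < k) : st4v p k M e j = 0 := by
  unfold st4v
  rw [Finset.sum_apply]
  refine Finset.sum_eq_zero fun t _ => ?_
  rw [Pi.smul_apply, st4psi_head hM t j hj, smul_zero]

lemma st4v_tail_of_headzero (e : Fin n →₀ ℕ)
    (he : ∀ i : Fin n, (i : ℕ) < k → e i = 0) (t : Fin n) (ht : k ≤ (t : ℕ)) :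
    st4v p k M e t = (e t : ZMod p) := by
  unfold st4v
  rw [Finset.sum_apply, Finset.sum_eq_single t]
  · rw [Pi.smul_apply]
    unfold st4psi
    rw [dif_neg (by omega)]
    rw [Pi.single_eq_same, nsmul_eq_mul, mul_one]
  · intro j _ hjt
    rw [Pi.smul_apply]
    unfold st4psi
    split_ifs with h
    · rw [he j h, zero_smul]
    · rw [Pi.single_eq_of_ne (Ne.symm hjt), smul_zero]
  · intro h; exact absurd (Finset.mem_univ t) h

lemma st4_toExp_v_le [NeZero p] (hM : ∀ (i : Fin k) (j : Fin n), (j : ℕ) < k → M i j = 0)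
    (e : Fin n →₀ ℕ) : toLex (toExp (st4v p k M e)) ≤ toLex e := by
  by_cases hcase : ∀ i : Fin n, (i : ℕ) < k → e i = 0
  · refine Finsupp.toLex_monotone (Finsupp.le_def.2 fun j => ?_)
    rw [toExp_apply]
    by_cases hj : (j : ℕ) < k
    · rw [st4v_head hM e j hj, ZMod.val_zero]; exact Nat.zero_le _
    · rw [st4v_tail_of_headzero e hcase j (by omega), ZMod.val_natCast]
      exact Nat.mod_le _ _
  · push_neg at hcase
    classical
    obtain ⟨i, hi_mem, hmin⟩ :=
      Finset.exists_min_image ((Finset.univ : Finset (Fin n)).filter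
        fun i : Fin n => (i : ℕ) < k ∧ e i ≠ 0) id
        (by obtain ⟨i0, h1, h2⟩ := hcase; exact ⟨i0, by simp [h1, h2]⟩)
    simp only [Finset.mem_filter, Finset.mem_univ, true_and] at hi_mem hmin
    obtain ⟨hik, hine⟩ := hi_mem
    refine le_of_lt (st4_lex_lt i (fun d hd => ?_) ?_)
    · have hdk : (d : ℕ) < k := lt_trans (Fin.lt_def.1 hd) hik
      have hed : e d = 0 := by
        by_contra hne
        exact absurd hd (not_lt.2 (hmin d ⟨hdk, hne⟩))
      rw [toExp_apply, st4v_head hM e d hdk, ZMod.val_zero, hed]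
    · rw [toExp_apply, st4v_head hM e i hik, ZMod.val_zero]
      exact Nat.pos_of_ne_zero hine

lemma st4_toExp_v_fix [NeZero p] (hM : ∀ (i : Fin k) (j : Fin n), (j : ℕ) < k → M i j = 0)
    (d : Fin n →₀ ℕ) (h1 : ∀ i : Fin n, (i : ℕ) < k → d i = 0)
    (h2 : ∀ j : Fin n, k ≤ (j : ℕ) → d j < p) : toExp (st4v p k M d) = d := by
  ext j
  rw [toExp_apply]
  by_cases hj : (j : ℕ) < k
  · rw [st4v_head hM d j hj, ZMod.val_zero, h1 j hj]
  · rw [st4v_tail_of_headzero d h1 j (by omega), ZMod.val_natCast,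
      Nat.mod_eq_of_lt (h2 j (by omega))]

end AuxST4


section AuxST4b

variable {p n k : ℕ} {K : Type*} [Field K] {M : Fin k → Fin n → ZMod p}

noncomputable def st4Phi (p : ℕ) {n : ℕ} (k : ℕ) (M : Fin k → Fin n → ZMod p)
    (K : Type*) [Field K] :
    MvPolynomial (Fin n) K →ₐ[K] AddMonoidAlgebra K (Fin n → ZMod p) :=
  MvPolynomial.aeval fun t => AddMonoidAlgebra.single (st4psi p k M t) 1

lemma st4Phi_monomial (e : Fin n →₀ ℕ) (c : K) :
    st4Phi p k M K (monomial e c) = AddMonoidAlgebra.single (st4v p k M e) c := by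
  unfold st4Phi
  rw [aeval_monomial, Finsupp.prod_fintype _ _ (fun i => pow_zero _)]
  have h1 : ∀ t : Fin n, (AddMonoidAlgebra.single (st4psi p k M t) (1:K)) ^ (e t)
      = AddMonoidAlgebra.single ((e t) • st4psi p k M t) 1 := by
    intro t; rw [AddMonoidAlgebra.single_pow, one_pow]
  rw [Finset.prod_congr rfl (fun t _ => h1 t), AddMonoidAlgebra.prod_single,
    Finset.prod_const_one]
  have h2 : algebraMap K (AddMonoidAlgebra K (Fin n → ZMod p)) c
      = AddMonoidAlgebra.single 0 c := rfl
  rw [h2, AddMonoidAlgebra.single_mul_single, zero_add, mul_one]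
  rfl

lemma st4Phi_sum (f : MvPolynomial (Fin n) K) :
    st4Phi p k M K f = ∑ e ∈ f.support, AddMonoidAlgebra.single (st4v p k M e) (coeff e f) := by
  conv_lhs => rw [f.as_sum]
  rw [map_sum]
  exact Finset.sum_congr rfl fun e _ => st4Phi_monomial e _

lemma st4_key [NeZero p] (hM : ∀ (i : Fin k) (j : Fin n), (j : ℕ) < k → M i j = 0)
    (f : MvPolynomial (Fin n) K) (hker : st4Phi p k M K f = 0)
    (d : Fin n →₀ ℕ) (hd : d ∈ f.support) (hmax : ∀ e ∈ f.support, toLex e ≤ toLex d)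
    (h1 : ∀ i : Fin n, (i : ℕ) < k → d i = 0) (h2 : ∀ j : Fin n, k ≤ (j : ℕ) → d j < p) :
    False := by
  have h0 : (st4Phi p k M K f).coeff (st4v p k M d) = 0 := by rw [hker]; rfl
  simp only [st4Phi_sum, AddMonoidAlgebra.coeff_sum, AddMonoidAlgebra.coeff_single,
    Finsupp.finset_sum_apply] at h0
  rw [Finset.sum_eq_single d] at h0
  · rw [Finsupp.single_eq_same] at h0
    exact (MvPolynomial.mem_support_iff.1 hd) h0
  · intro e he hne
    rw [Finsupp.single_apply, if_neg]
    intro hveq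
    apply hne
    have hfix : toExp (st4v p k M e) = d := by
      rw [hveq]; exact st4_toExp_v_fix hM d h1 h2
    have hle : toLex d ≤ toLex e := hfix ▸ st4_toExp_v_le hM e
    exact toLex.injective (le_antisymm (hmax e he) hle)
  · intro hnd; exact absurd hd hnd

lemma st4_sub_monomial_coeff (a b : Fin n →₀ ℕ) (hab : a ≠ b) :
    coeff a (monomial a (1:K) - monomial b 1) = 1 := by
  rw [coeff_sub, coeff_monomial, coeff_monomial, if_pos rfl,
    if_neg (fun hc => hab hc.symm), sub_zero]

lemma st4_sub_monomial_support {a b e : Fin n →₀ ℕ}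
    (he : e ∈ (monomial a (1:K) - monomial b 1).support) : e = a ∨ e = b := by
  by_contra hc
  push_neg at hc
  apply MvPolynomial.mem_support_iff.1 he
  rw [coeff_sub, coeff_monomial, coeff_monomial, if_neg (fun h => hc.1 h.symm),
    if_neg (fun h => hc.2 h.symm), sub_zero]

lemma st4_isLeadExp_sub {a b : Fin n →₀ ℕ} (h : toLex b < toLex a) :
    IsLeadExp lexLe (monomial a (1:K) - monomial b 1) a := by
  constructor
  · rw [MvPolynomial.mem_support_iff,
      st4_sub_monomial_coeff a b (fun hc => h.ne' (congrArg toLex hc))]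
    exact one_ne_zero
  · intro e he
    rcases st4_sub_monomial_support he with rfl | rfl
    · exact le_refl (toLex e)
    · exact le_of_lt h

lemma st4_leadExp_unique {f : MvPolynomial (Fin n) K} {d d'}
    (h : IsLeadExp lexLe f d) (h' : IsLeadExp lexLe f d') : d = d' :=
  toLex.injective (le_antisymm (h'.2 d h.1) (h.2 d' h'.1))

end AuxST4b


lemma st4_monomial_eq_prod {n : ℕ} {K : Type*} [Field K] (d : Fin n →₀ ℕ) :
    (monomial d 1 : MvPolynomial (Fin n) K) = ∏ t : Fin n, X t ^ d t := by
  rw [monomial_eq, Finsupp.prod_fintype]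
  · simp
  · intro i; exact pow_zero _

set_option maxHeartbeats 4000000 in
set_option synthInstance.maxHeartbeats 1000000 in
/-- for a code C over F_p with standard generator matrix whose rows are
g_i = e_i − m_i (m_i supported on coordinates k+1,…,n), the set
{x_i − x^{m_i} : 1 ≤ i ≤ k} ∪ {x_i^p − 1 : k+1 ≤ i ≤ n} generates I(C) and is the
reduced Gröbner basis of I(C) w.r.t. the lex order x_1 ≻ … ≻ x_n. -/
theorem stmt_4 (p : ℕ) (hp : p.Prime) (K : Type*) [Field K] (n k : ℕ) (hk : k ≤ n)
    (M : Fin k → Fin n → ZMod p) (hM : ∀ (i : Fin k) (j : Fin n), (j : ℕ) < k → M i j = 0)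
    (g : Fin k → Fin n → ZMod p)
    (hg : ∀ (i : Fin k) (j : Fin n), g i j = (if (j : ℕ) = (i : ℕ) then 1 else 0) - M i j)
    (C : Submodule (ZMod p) (Fin n → ZMod p))
    (hC : C = Submodule.span (ZMod p) (Set.range g))
    (G : Set (MvPolynomial (Fin n) K))
    (hG : G = {f | ∃ i : Fin k,
                f = X (Fin.castLE hk i) - monomial (toExp (M i)) (1 : K)} ∪
              {f | ∃ i : Fin n, k ≤ (i : ℕ) ∧ f = X i ^ p - 1}) :
    Ideal.span G = codeIdeal p K C ∧
      IsReducedGroebnerBasis lexLe G (codeIdeal p K C) := by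
  haveI : Fact p.Prime := ⟨hp⟩
  haveI : Fact (1 < p) := ⟨hp.one_lt⟩
  haveI : NeZero p := ⟨hp.ne_zero⟩
  classical
  have hX : ∀ j : Fin n, (X j : MvPolynomial (Fin n) K) = monomial (Finsupp.single j 1) 1 := by
    intro j; rw [← pow_one (X j : MvPolynomial (Fin n) K), X_pow_eq_monomial]
  have hXp : ∀ j : Fin n, (X j : MvPolynomial (Fin n) K) ^ p = monomial (Finsupp.single j p) 1 :=
    fun j => X_pow_eq_monomial
  have hone : (1 : MvPolynomial (Fin n) K) = monomial 0 1 := by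
    rw [monomial_zero', C_1]
  set a : Fin k → Fin n → ZMod p := fun i j => if (j : ℕ) = (i : ℕ) then 1 else 0 with ha
  have hcond : ∀ (i : Fin k) (j : Fin n), (Fin.castLE hk i = j) ↔ ((j : ℕ) = (i : ℕ)) := by
    intro i j
    rw [Fin.ext_iff, Fin.coe_castLE]
    omega
  have hexpa : ∀ i : Fin k, toExp (a i) = Finsupp.single (Fin.castLE hk i) 1 := by
    intro i
    ext j
    rw [toExp_apply, Finsupp.single_apply, ha]
    by_cases hji : (j : ℕ) = (i : ℕ)
    · simp only [hji, if_true, if_pos ((hcond i j).2 hji)]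
      exact ZMod.val_one p
    · simp only [hji, if_false, if_neg (fun h => hji ((hcond i j).1 h))]
      exact ZMod.val_zero
  have hag : ∀ i : Fin k, a i - M i = g i := by
    intro i
    funext j
    rw [Pi.sub_apply, hg i j, ha]
  -- Part 1, direction A
  have hGsub : Ideal.span G ≤ codeIdeal p K C := by
    rw [Ideal.span_le]
    intro f hf
    rw [hG] at hf
    unfold codeIdeal
    apply Ideal.subset_span
    rcases hf with ⟨i, rfl⟩ | ⟨j, hj, rfl⟩
    · left
      refine ⟨a i, M i, ?_, ?_⟩
      · rw [hag i, hC]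
        exact Submodule.subset_span ⟨i, rfl⟩
      · rw [hexpa i, ← hX]
    · exact Or.inr ⟨j, rfl⟩
  -- Part 1, direction B
  have hCsub : codeIdeal p K C ≤ Ideal.span G := by
    unfold codeIdeal
    rw [Ideal.span_le]
    set I := Ideal.span G with hIdef
    set π : MvPolynomial (Fin n) K →+* MvPolynomial (Fin n) K ⧸ I := Ideal.Quotient.mk I with hπ
    set u : Fin n → MvPolynomial (Fin n) K ⧸ I := fun j => π (X j) with hu
    have hmem : ∀ f : MvPolynomial (Fin n) K, π f = 0 → f ∈ (I : Set _) := fun f hf =>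
      Ideal.Quotient.eq_zero_iff_mem.1 hf
    have hGzero : ∀ f ∈ G, π f = 0 := fun f hf =>
      Ideal.Quotient.eq_zero_iff_mem.2 (Ideal.subset_span hf)
    have hmon : ∀ d : Fin n →₀ ℕ, π (monomial d 1) = ∏ t : Fin n, u t ^ d t := by
      intro d
      rw [st4_monomial_eq_prod, map_prod]
      exact Finset.prod_congr rfl fun t _ => by rw [map_pow, hu]
    have htail : ∀ j : Fin n, k ≤ (j : ℕ) → u j ^ p = 1 := by
      intro j hj
      have h0 : π ((X j : MvPolynomial (Fin n) K) ^ p - 1) = 0 :=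
        hGzero _ (by rw [hG]; exact Or.inr ⟨j, hj, rfl⟩)
      rw [map_sub, map_pow, map_one, sub_eq_zero] at h0
      exact h0
    have hhead : ∀ i : Fin k, u (Fin.castLE hk i) = ∏ t : Fin n, u t ^ (M i t).val := by
      intro i
      have h0 : π (X (Fin.castLE hk i) - monomial (toExp (M i)) (1 : K)) = 0 :=
        hGzero _ (by rw [hG]; exact Or.inl ⟨i, rfl⟩)
      rw [map_sub, sub_eq_zero, hmon] at h0
      exact h0
    have hupow : ∀ j : Fin n, u j ^ p = 1 := by
      intro j
      by_cases hj : (j : ℕ) < k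
      · have hcj : Fin.castLE hk ⟨(j : ℕ), hj⟩ = j := Fin.ext rfl
        have h1 := hhead ⟨(j : ℕ), hj⟩
        rw [hcj] at h1
        rw [h1, ← Finset.prod_pow]
        refine Finset.prod_eq_one fun t _ => ?_
        by_cases htk : (t : ℕ) < k
        · rw [hM _ _ htk, ZMod.val_zero, pow_zero, one_pow]
        · rw [← pow_mul, mul_comm, pow_mul, htail t (by omega), one_pow]
      · exact htail j (by omega)
    set φ : (Fin n → ZMod p) → MvPolynomial (Fin n) K ⧸ I :=
      fun c => ∏ j : Fin n, u j ^ (c j).val with hφ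
    have hmodp : ∀ x : MvPolynomial (Fin n) K ⧸ I, x ^ p = 1 → ∀ m : ℕ, x ^ (m % p) = x ^ m := by
      intro x hx m
      conv_rhs => rw [← Nat.div_add_mod m p]
      rw [pow_add, pow_mul, hx, one_pow, one_mul]
    have hφadd : ∀ c1 c2, φ (c1 + c2) = φ c1 * φ c2 := by
      intro c1 c2
      simp only [hφ]
      rw [← Finset.prod_mul_distrib]
      refine Finset.prod_congr rfl fun j _ => ?_
      rw [Pi.add_apply, ZMod.val_add, hmodp _ (hupow j), pow_add]
    have hφzero : φ 0 = 1 := by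
      simp only [hφ]
      refine Finset.prod_eq_one fun j _ => ?_
      rw [Pi.zero_apply, ZMod.val_zero, pow_zero]
    have hφnsmul : ∀ (m : ℕ) c, φ (m • c) = φ c ^ m := by
      intro m
      induction m with
      | zero => intro c; rw [zero_smul, pow_zero, hφzero]
      | succ m ih => intro c; rw [succ_nsmul, hφadd, ih, pow_succ]
    have hφC : ∀ c ∈ C, φ c = 1 := by
      intro c hc
      rw [hC] at hc
      induction hc using Submodule.span_induction with
      | mem x hx =>
        obtain ⟨i, rfl⟩ := hx
        have hA : φ (a i) = u (Fin.castLE hk i) := by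
          simp only [hφ]
          rw [Finset.prod_eq_single (Fin.castLE hk i)]
          · have h1 : a i (Fin.castLE hk i) = 1 := by
              rw [ha]
              simp only
              rw [if_pos ((hcond i _).1 rfl)]
            rw [h1, ZMod.val_one p, pow_one]
          · intro b _ hb
            have h1 : a i b = 0 := by
              rw [ha]
              simp only
              rw [if_neg (fun h => hb ((hcond i b).2 h).symm)]
            rw [h1, ZMod.val_zero, pow_zero]
          · intro h; exact absurd (Finset.mem_univ _) h
        have h1 : φ (a i) = φ (M i) := by
          rw [hA, hhead i]
        have h2 : M i + g i = a i := by
          funext j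
          rw [Pi.add_apply, hg i j, ha]
          ring
        have h3 : φ (M i) * φ (g i) = φ (M i) := by
          rw [← hφadd, h2, h1]
        have hswap : φ (-(M i)) * φ (M i) = 1 := by
          rw [← hφadd, neg_add_cancel, hφzero]
        calc φ (g i) = (φ (-(M i)) * φ (M i)) * φ (g i) := by rw [hswap, one_mul]
          _ = φ (-(M i)) * (φ (M i) * φ (g i)) := mul_assoc _ _ _
          _ = φ (-(M i)) * φ (M i) := by rw [h3]
          _ = 1 := hswap
      | zero => exact hφzero
      | add x y hx hy ihx ihy => rw [hφadd, ihx, ihy, one_mul]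
      | smul s x hx ih =>
        have hs : s • x = s.val • x := by
          conv_lhs => rw [show s = ((s.val : ℕ) : ZMod p) from
            ((ZMod.natCast_val s).trans (ZMod.cast_id _ _)).symm]
          rw [Nat.cast_smul_eq_nsmul]
        rw [hs, hφnsmul, ih, one_pow]
    intro f hf
    rcases hf with ⟨c1, c2, hcC, rfl⟩ | ⟨j, rfl⟩
    · apply hmem
      rw [map_sub, hmon, hmon]
      have e1 : (∏ t : Fin n, u t ^ (toExp c1) t) = φ c1 := by
        simp only [hφ]
        exact Finset.prod_congr rfl fun t _ => by rw [toExp_apply]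
      have e2 : (∏ t : Fin n, u t ^ (toExp c2) t) = φ c2 := by
        simp only [hφ]
        exact Finset.prod_congr rfl fun t _ => by rw [toExp_apply]
      rw [e1, e2]
      have h5 : φ c1 = φ c2 := by
        have h6 : c1 = (c1 - c2) + c2 := by ring
        rw [h6, hφadd, hφC _ hcC, one_mul]
      rw [h5, sub_self]
    · apply hmem
      rw [map_sub, map_pow, map_one, sub_eq_zero]
      exact hupow j
  have hspan : Ideal.span G = codeIdeal p K C := le_antisymm hGsub hCsub
  -- Part 2
  have hq : ∀ i : Fin k, (X (Fin.castLE hk i) - monomial (toExp (M i)) (1 : K))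
      = monomial (Finsupp.single (Fin.castLE hk i) 1) 1 - monomial (toExp (M i)) 1 := by
    intro i; rw [hX]
  have hh : ∀ j : Fin n, ((X j : MvPolynomial (Fin n) K) ^ p - 1)
      = monomial (Finsupp.single j p) 1 - monomial 0 1 := by
    intro j; rw [hXp, hone]
  have hlexq : ∀ i : Fin k, toLex (toExp (M i)) < toLex (Finsupp.single (Fin.castLE hk i) 1) := by
    intro i
    refine st4_lex_lt (Fin.castLE hk i) (fun d hd => ?_) ?_
    · have hdk : (d : ℕ) < k := by
        have h1 := Fin.lt_def.1 hd
        rw [Fin.coe_castLE] at h1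
        exact lt_trans h1 i.isLt
      rw [toExp_apply, hM i d hdk, ZMod.val_zero, Finsupp.single_apply, if_neg (ne_of_gt hd)]
    · rw [toExp_apply, hM i _ (by rw [Fin.coe_castLE]; exact i.isLt), ZMod.val_zero,
        Finsupp.single_eq_same]
      exact Nat.one_pos
  have hlexh : ∀ j : Fin n, toLex (0 : Fin n →₀ ℕ) < toLex (Finsupp.single j p) := by
    intro j
    refine st4_lex_lt j (fun d hd => ?_) ?_
    · rw [Finsupp.coe_zero, Pi.zero_apply, Finsupp.single_apply, if_neg (ne_of_gt hd)]
    · rw [Finsupp.coe_zero, Pi.zero_apply, Finsupp.single_eq_same]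
      exact hp.pos
  have hLEq : ∀ i : Fin k, IsLeadExp lexLe (X (Fin.castLE hk i) - monomial (toExp (M i)) (1 : K))
      (Finsupp.single (Fin.castLE hk i) 1) := by
    intro i; rw [hq]; exact st4_isLeadExp_sub (hlexq i)
  have hLEh : ∀ j : Fin n, IsLeadExp lexLe ((X j : MvPolynomial (Fin n) K) ^ p - 1)
      (Finsupp.single j p) := by
    intro j; rw [hh]; exact st4_isLeadExp_sub (hlexh j)
  have hGI' : ∀ f ∈ G, f ∈ codeIdeal p K C := fun f hf => hspan ▸ Ideal.subset_span hf
  set S₁ : Set (MvPolynomial (Fin n) K) :=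
    {q | ∃ i : Fin k, q = monomial (Finsupp.single (Fin.castLE hk i) 1) 1} ∪
    {q | ∃ j : Fin n, k ≤ (j : ℕ) ∧ q = monomial (Finsupp.single j p) 1} with hS₁
  have hS0S1 : {q | ∃ g' ∈ G, ∃ d, IsLeadExp lexLe g' d ∧ q = monomial d (1 : K)} = S₁ := by
    ext q
    constructor
    · rintro ⟨g', hg', d, hld, rfl⟩
      rw [hG] at hg'
      rw [hS₁]
      rcases hg' with ⟨i, rfl⟩ | ⟨j, hj, rfl⟩
      · exact Or.inl ⟨i, by rw [st4_leadExp_unique hld (hLEq i)]⟩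
      · exact Or.inr ⟨j, hj, by rw [st4_leadExp_unique hld (hLEh j)]⟩
    · intro hq1
      rw [hS₁] at hq1
      rcases hq1 with ⟨i, rfl⟩ | ⟨j, hj, rfl⟩
      · exact ⟨_, by rw [hG]; exact Or.inl ⟨i, rfl⟩, _, hLEq i, rfl⟩
      · exact ⟨_, by rw [hG]; exact Or.inr ⟨j, hj, rfl⟩, _, hLEh j, rfl⟩
  -- Phi kills the ideal
  have hPhiG : ∀ f ∈ Ideal.span G, st4Phi p k M K f = 0 := by
    have hker : Ideal.span G ≤ RingHom.ker (st4Phi p k M K).toRingHom := by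
      rw [Ideal.span_le]
      intro f' hf'
      rw [hG] at hf'
      rw [SetLike.mem_coe, RingHom.mem_ker]
      rcases hf' with ⟨i, rfl⟩ | ⟨j, hj, rfl⟩
      · have e1 : st4v p k M (Finsupp.single (Fin.castLE hk i) 1) = M i := by
          rw [st4v_single, one_smul]
          unfold st4psi
          rw [dif_pos (show ((Fin.castLE hk i : Fin n) : ℕ) < k from by
            rw [Fin.coe_castLE]; exact i.isLt)]
          congr 1
        have e2 : st4v p k M (toExp (M i)) = M i := by
          funext s
          by_cases hs : (s : ℕ) < k
          · rw [st4v_head hM _ s hs, hM i s hs]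
          · rw [st4v_tail_of_headzero _
              (fun t ht => by rw [toExp_apply, hM i t ht, ZMod.val_zero]) s (by omega),
              toExp_apply]
            exact (ZMod.natCast_val _).trans (ZMod.cast_id _ _)
        show st4Phi p k M K _ = 0
        rw [hq i, map_sub, st4Phi_monomial, st4Phi_monomial, e1, e2, sub_self]
      · have e1 : st4v p k M (Finsupp.single j p) = 0 := by
          rw [st4v_single]
          funext s
          rw [Pi.smul_apply, nsmul_eq_mul, ZMod.natCast_self, zero_mul, Pi.zero_apply]
        have e2 : st4v p k M (0 : Fin n →₀ ℕ) = 0 := by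
          unfold st4v
          refine Finset.sum_eq_zero fun t _ => ?_
          rw [Finsupp.coe_zero, Pi.zero_apply, zero_smul]
        show st4Phi p k M K _ = 0
        rw [hh j, map_sub, st4Phi_monomial, st4Phi_monomial, e1, e2, sub_self]
    exact fun f hf => hker hf
  have hlead : leadIdeal lexLe (codeIdeal p K C) = Ideal.span S₁ := by
    apply le_antisymm
    · unfold leadIdeal
      rw [Ideal.span_le]
      rintro q ⟨f, hfI, d, hld, rfl⟩
      rw [← hspan] at hfI
      rw [SetLike.mem_coe]
      by_cases h1 : ∃ i : Fin n, (i : ℕ) < k ∧ d i ≠ 0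
      · obtain ⟨i, hik, hdne⟩ := h1
        have hdec : d = Finsupp.single i 1 + (d - Finsupp.single i 1) := by
          ext s
          rw [Finsupp.add_apply, Finsupp.tsub_apply, Finsupp.single_apply]
          by_cases hsi : i = s
          · subst hsi; rw [if_pos rfl]; omega
          · rw [if_neg hsi]; omega
        have hfac : (monomial d (1 : K))
            = monomial (Finsupp.single i 1) 1 * monomial (d - Finsupp.single i 1) 1 := by
          rw [monomial_mul, one_mul, ← hdec]
        rw [hfac]
        refine Ideal.mul_mem_right _ _ (Ideal.subset_span ?_)
        rw [hS₁]
        exact Or.inl ⟨⟨(i : ℕ), hik⟩, by rw [show Fin.castLE hk ⟨(i : ℕ), hik⟩ = i from Fin.ext rfl]⟩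
      · by_cases h2 : ∃ j : Fin n, k ≤ (j : ℕ) ∧ p ≤ d j
        · obtain ⟨j, hjk, hdj⟩ := h2
          have hdec : d = Finsupp.single j p + (d - Finsupp.single j p) := by
            ext s
            rw [Finsupp.add_apply, Finsupp.tsub_apply, Finsupp.single_apply]
            by_cases hsj : j = s
            · subst hsj; rw [if_pos rfl]; omega
            · rw [if_neg hsj]; omega
          have hfac : (monomial d (1 : K))
              = monomial (Finsupp.single j p) 1 * monomial (d - Finsupp.single j p) 1 := by
            rw [monomial_mul, one_mul, ← hdec]
          rw [hfac]
          refine Ideal.mul_mem_right _ _ (Ideal.subset_span ?_)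
          rw [hS₁]
          exact Or.inr ⟨j, hjk, rfl⟩
        · exfalso
          push_neg at h1 h2
          exact st4_key hM f (hPhiG f hfI) d hld.1 hld.2 h1 h2
    · rw [Ideal.span_le]
      intro q hq1
      rw [hS₁] at hq1
      rw [SetLike.mem_coe]
      unfold leadIdeal
      apply Ideal.subset_span
      rcases hq1 with ⟨i, rfl⟩ | ⟨j, hj, rfl⟩
      · exact ⟨_, hGI' _ (by rw [hG]; exact Or.inl ⟨i, rfl⟩), _, hLEq i, rfl⟩
      · exact ⟨_, hGI' _ (by rw [hG]; exact Or.inr ⟨j, hj, rfl⟩), _, hLEh j, rfl⟩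
  have hmonic : ∀ g' ∈ G, ∀ d, IsLeadExp lexLe g' d → coeff d g' = 1 := by
    intro g' hg' d hld
    rw [hG] at hg'
    rcases hg' with ⟨i, rfl⟩ | ⟨j, hj, rfl⟩
    · rw [st4_leadExp_unique hld (hLEq i), hq]
      exact st4_sub_monomial_coeff _ _ (fun hc => (hlexq i).ne' (congrArg toLex hc))
    · rw [st4_leadExp_unique hld (hLEh j), hh]
      exact st4_sub_monomial_coeff _ _ (fun hc => (hlexh j).ne' (congrArg toLex hc))
  have hnodiv : ∀ g' ∈ G, ∀ h' ∈ G, g' ≠ h' → ∀ d, IsLeadExp lexLe g' d →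
      ∀ e ∈ h'.support, ¬ d ≤ e := by
    intro g' hg' h' hh' hne d hld e he hdle
    rw [hG] at hg' hh'
    have h1p : 1 < p := hp.one_lt
    have hdle' := Finsupp.le_def.1 hdle
    rcases hg' with ⟨i, rfl⟩ | ⟨j, hj, rfl⟩
    · rw [st4_leadExp_unique hld (hLEq i)] at hdle'
      have hcoord := hdle' (Fin.castLE hk i)
      rw [Finsupp.single_eq_same] at hcoord
      rcases hh' with ⟨i2, rfl⟩ | ⟨j2, hj2, rfl⟩
      · rw [hq] at he
        rcases st4_sub_monomial_support he with rfl | rfl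
        · rw [Finsupp.single_apply] at hcoord
          by_cases hc : Fin.castLE hk i2 = Fin.castLE hk i
          · have hii : i2 = i := by
              apply Fin.ext
              have h4 := congrArg Fin.val hc
              rwa [Fin.coe_castLE, Fin.coe_castLE] at h4
            exact hne (by rw [hii])
          · rw [if_neg hc] at hcoord; omega
        · rw [toExp_apply, hM i2 _ (by rw [Fin.coe_castLE]; exact i.isLt), ZMod.val_zero]
            at hcoord
          omega
      · rw [hh] at he
        rcases st4_sub_monomial_support he with rfl | rfl
        · rw [Finsupp.single_apply, if_neg (fun hc : j2 = Fin.castLE hk i => by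
            have h4 := congrArg Fin.val hc
            rw [Fin.coe_castLE] at h4
            omega)] at hcoord
          omega
        · rw [Finsupp.coe_zero, Pi.zero_apply] at hcoord; omega
    · rw [st4_leadExp_unique hld (hLEh j)] at hdle'
      have hcoord := hdle' j
      rw [Finsupp.single_eq_same] at hcoord
      rcases hh' with ⟨i2, rfl⟩ | ⟨j2, hj2, rfl⟩
      · rw [hq] at he
        rcases st4_sub_monomial_support he with rfl | rfl
        · rw [Finsupp.single_apply] at hcoord
          split_ifs at hcoord <;> omega
        · rw [toExp_apply] at hcoord
          exact absurd hcoord (not_le.2 (ZMod.val_lt _))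
      · rw [hh] at he
        rcases st4_sub_monomial_support he with rfl | rfl
        · rw [Finsupp.single_apply] at hcoord
          by_cases hc : j2 = j
          · subst hc; exact hne rfl
          · rw [if_neg hc] at hcoord; omega
        · rw [Finsupp.coe_zero, Pi.zero_apply] at hcoord; omega
  exact ⟨hspan, ⟨⟨fun f hf => hGI' f hf, by rw [hS0S1]; exact hlead⟩, hmonic, hnodiv⟩⟩
end

section
/- Let C be a linear code of length n over F_p and let ≻ be any monomial order on K[x_1,…,x_n]. The standard monomials of I(C) (monomials not in the leading ideal lt_≻(I(C))) are in bijection with the cosets of F_p^n / C: each coset contains the exponent of exactly one standard monomial. -/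
open MvPolynomial

theorem aux_lt_wf {n : ℕ} (le : (Fin n →₀ ℕ) → (Fin n →₀ ℕ) → Prop)
    (htrans : Transitive le) (hantisymm : AntiSymmetric le)
    (hzero : ∀ a, le 0 a) (hadd : ∀ a b c, le a b → le (a + c) (b + c)) :
    WellFounded (fun a b : (Fin n →₀ ℕ) => le a b ∧ a ≠ b) := by
  haveI : IsIrrefl (Fin n →₀ ℕ) (fun a b => le a b ∧ a ≠ b) := ⟨fun a h => h.2 rfl⟩
  haveI : IsTrans (Fin n →₀ ℕ) (fun a b => le a b ∧ a ≠ b) :=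
    ⟨fun a b c h1 h2 => ⟨htrans h1.1 h2.1,
      fun hac => h1.2 (hantisymm h1.1 (hac ▸ h2.1))⟩⟩
  haveI : IsStrictOrder (Fin n →₀ ℕ) (fun a b => le a b ∧ a ≠ b) := ⟨⟩
  rw [RelEmbedding.wellFounded_iff_isEmpty]
  refine ⟨fun f => ?_⟩
  obtain ⟨m, k, hmk, hle⟩ :=
    wellQuasiOrdered_le (α := Fin n →₀ ℕ) f
  have h1 : le (f m) (f k) := by
    have h2 := hadd 0 (f k - f m) (f m) (hzero _)
    rwa [zero_add, tsub_add_cancel_of_le hle] at h2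
  have h3 : le (f k) (f m) ∧ f k ≠ f m := f.map_rel_iff.2 hmk
  exact h3.2 (hantisymm h3.1 h1)

theorem aux_total_max {α : Type*} (le : α → α → Prop) (hrefl : Reflexive le)
    (htrans : Transitive le) (htotal : Total le) :
    ∀ (s : Finset α), s.Nonempty → ∃ d ∈ s, ∀ e ∈ s, le e d := by
  intro s hs
  induction hs using Finset.Nonempty.cons_induction with
  | singleton a => exact ⟨a, Finset.mem_singleton_self a, fun e he => by
      rw [Finset.mem_singleton] at he; rw [he]; exact hrefl a⟩
  | cons a s ha hs ih =>
      obtain ⟨d, hd, hmax⟩ := ih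
      rcases htotal a d with h | h
      · refine ⟨d, Finset.mem_cons_of_mem hd, fun e he => ?_⟩
        rcases Finset.mem_cons.1 he with rfl | he
        · exact h
        · exact hmax e he
      · refine ⟨a, Finset.mem_cons_self a s, fun e he => ?_⟩
        rcases Finset.mem_cons.1 he with rfl | he
        · exact hrefl e
        · exact htrans (hmax e he) h

theorem aux_mem_leadIdeal {σ K : Type*} [Field K] [DecidableEq σ]
    (le : (σ →₀ ℕ) → (σ →₀ ℕ) → Prop) (I : Ideal (MvPolynomial σ K)) (u : σ →₀ ℕ)
    (h : monomial u (1 : K) ∈ leadIdeal le I) :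
    ∃ f ∈ I, ∃ d, IsLeadExp le f d ∧ d ≤ u := by
  have hset : {q | ∃ f ∈ I, ∃ d, IsLeadExp le f d ∧ q = monomial d (1 : K)}
      = (fun s => monomial s (1 : K)) '' {d | ∃ f ∈ I, IsLeadExp le f d} := by
    ext q
    constructor
    · rintro ⟨f, hf, d, hd, rfl⟩; exact ⟨d, ⟨f, hf, hd⟩, rfl⟩
    · rintro ⟨d, ⟨f, hf, hd⟩, rfl⟩; exact ⟨f, hf, d, hd, rfl⟩
  rw [leadIdeal, hset, mem_ideal_span_monomial_image] at h
  obtain ⟨d, ⟨f, hf, hd⟩, hdu⟩ := h u (by simp [mem_support_iff, coeff_monomial])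
  exact ⟨f, hf, d, hd, hdu⟩

theorem aux_mk_monomial_red (p : ℕ) [NeZero p] (K : Type*) [Field K] {n : ℕ}
    (C : Submodule (ZMod p) (Fin n → ZMod p)) (u : Fin n →₀ ℕ) :
    Ideal.Quotient.mk (codeIdeal p K C) (monomial u (1 : K)) =
      Ideal.Quotient.mk (codeIdeal p K C)
        (monomial (toExp fun i => ((u i : ℕ) : ZMod p)) (1 : K)) := by
  have hX : ∀ i : Fin n,
      (Ideal.Quotient.mk (codeIdeal p K C) (X i)) ^ p = 1 := by
    intro i
    rw [← map_pow, ← map_one (Ideal.Quotient.mk (codeIdeal p K C)), Ideal.Quotient.eq]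
    exact Ideal.subset_span (Or.inr ⟨i, rfl⟩)
  have hmono : ∀ v : Fin n →₀ ℕ, monomial v (1 : K) = ∏ i, X i ^ (v i) := by
    intro v
    rw [monomial_eq, C_1, one_mul]
    exact Finsupp.prod_fintype _ _ (fun i => pow_zero _)
  rw [hmono, hmono, map_prod, map_prod]
  apply Finset.prod_congr rfl
  intro i _
  have h1 : toExp (fun j => ((u j : ℕ) : ZMod p)) i = u i % p := by
    simp [toExp, ZMod.val_natCast]
  rw [map_pow, map_pow, h1]
  conv_lhs => rw [← Nat.mod_add_div (u i) p, pow_add, pow_mul, hX i, one_pow, mul_one]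

theorem aux_mk_monomial_congr (p : ℕ) [NeZero p] (K : Type*) [Field K] {n : ℕ}
    (C : Submodule (ZMod p) (Fin n → ZMod p)) (a b : Fin n →₀ ℕ)
    (hab : (fun i => ((a i : ℕ) : ZMod p)) - (fun i => ((b i : ℕ) : ZMod p)) ∈ C) :
    Ideal.Quotient.mk (codeIdeal p K C) (monomial a (1 : K)) =
      Ideal.Quotient.mk (codeIdeal p K C) (monomial b (1 : K)) := by
  rw [aux_mk_monomial_red p K C a, aux_mk_monomial_red p K C b, Ideal.Quotient.eq]
  exact Ideal.subset_span (Or.inl ⟨_, _, hab, rfl⟩)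

theorem aux_two_term (p : ℕ) [NeZero p] (K : Type*) [Field K] {n : ℕ}
    (C : Submodule (ZMod p) (Fin n → ZMod p))
    (le : (Fin n →₀ ℕ) → (Fin n →₀ ℕ) → Prop) (hrefl : Reflexive le)
    (u₁ u₂ : Fin n →₀ ℕ) (hle : le u₂ u₁) (hne : u₂ ≠ u₁)
    (hC : (fun i => ((u₁ i : ℕ) : ZMod p)) - (fun i => ((u₂ i : ℕ) : ZMod p)) ∈ C) :
    monomial u₁ (1 : K) ∈ leadIdeal le (codeIdeal p K C) := by
  classical
  set f := monomial u₁ (1 : K) - monomial u₂ 1 with hf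
  have hfI : f ∈ codeIdeal p K C := by
    rw [hf, ← Ideal.Quotient.eq]
    exact aux_mk_monomial_congr p K C u₁ u₂ hC
  have hu₁ : u₁ ∈ f.support := by
    rw [mem_support_iff, hf, coeff_sub, coeff_monomial, coeff_monomial,
      if_pos rfl, if_neg hne]
    simp
  refine Ideal.subset_span ⟨f, hfI, u₁, ⟨hu₁, ?_⟩, rfl⟩
  intro e he
  have := support_sub (σ := Fin n) (monomial u₁ (1 : K)) (monomial u₂ 1) he
  rcases Finset.mem_union.1 this with h | h
  · have : e = u₁ := by
      have := support_monomial_subset h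
      rwa [Finset.mem_singleton] at this
    rw [this]; exact hrefl u₁
  · have : e = u₂ := by
      have := support_monomial_subset h
      rwa [Finset.mem_singleton] at this
    rw [this]; exact hle

/-- Reduction mod p followed by quotient by the code, as an `AddMonoidHom`. -/
noncomputable def auxRedHom (p n : ℕ) (C : Submodule (ZMod p) (Fin n → ZMod p)) :
    (Fin n →₀ ℕ) →+ ((Fin n → ZMod p) ⧸ C) where
  toFun u := Submodule.Quotient.mk (fun i => ((u i : ℕ) : ZMod p))
  map_zero' := by
    show Submodule.Quotient.mk _ = 0
    have : (fun i => (((0 : Fin n →₀ ℕ) i : ℕ) : ZMod p)) = (0 : Fin n → ZMod p) := by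
      funext i; simp
    rw [this, Submodule.Quotient.mk_zero]
  map_add' a b := by
    show Submodule.Quotient.mk _ = Submodule.Quotient.mk _ + Submodule.Quotient.mk _
    have : (fun i => (((a + b) i : ℕ) : ZMod p))
        = (fun i => ((a i : ℕ) : ZMod p)) + (fun i => ((b i : ℕ) : ZMod p)) := by
      funext i; simp [Finsupp.add_apply]
    rw [this, Submodule.Quotient.mk_add]

noncomputable def auxPhi (p n : ℕ) (K : Type*) [Field K]
    (C : Submodule (ZMod p) (Fin n → ZMod p)) :
    MvPolynomial (Fin n) K →+* AddMonoidAlgebra K ((Fin n → ZMod p) ⧸ C) :=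
  AddMonoidAlgebra.mapDomainRingHom K (auxRedHom p n C)

theorem auxPhi_monomial (p n : ℕ) (K : Type*) [Field K]
    (C : Submodule (ZMod p) (Fin n → ZMod p)) (v : Fin n →₀ ℕ) (c : K) :
    auxPhi p n K C (monomial v c) = AddMonoidAlgebra.single (auxRedHom p n C v) c := by
  rw [← single_eq_monomial]
  exact AddMonoidAlgebra.mapDomain_single

theorem auxRedHom_toExp (p n : ℕ) [NeZero p] (C : Submodule (ZMod p) (Fin n → ZMod p))
    (a : Fin n → ZMod p) : auxRedHom p n C (toExp a) = Submodule.Quotient.mk a := by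
  show Submodule.Quotient.mk _ = Submodule.Quotient.mk a
  congr 1
  funext i
  simp [toExp, ZMod.natCast_val, ZMod.cast_id]

theorem auxPhi_codeIdeal (p n : ℕ) [NeZero p] (K : Type*) [Field K]
    (C : Submodule (ZMod p) (Fin n → ZMod p)) :
    ∀ f ∈ codeIdeal p K C, auxPhi p n K C f = 0 := by
  have hker : codeIdeal p K C ≤ RingHom.ker (auxPhi p n K C) := by
    rw [codeIdeal, Ideal.span_le]
    rintro q (⟨a, b, hab, rfl⟩ | ⟨i, rfl⟩)
    · rw [SetLike.mem_coe, RingHom.mem_ker, map_sub, auxPhi_monomial, auxPhi_monomial,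
        auxRedHom_toExp, auxRedHom_toExp, sub_eq_zero]
      congr 1
      exact (Submodule.Quotient.eq C).2 hab
    · rw [SetLike.mem_coe, RingHom.mem_ker, map_sub, map_pow, map_one, X,
        auxPhi_monomial, AddMonoidAlgebra.single_pow, one_pow, sub_eq_zero,
        AddMonoidAlgebra.one_def]
      congr 1
      show p • Submodule.Quotient.mk _ = (0 : (Fin n → ZMod p) ⧸ C)
      rw [← Submodule.Quotient.mk_smul C (p : ℕ)]
      have : (p : ℕ) • (fun j => (((Finsupp.single i 1 : Fin n →₀ ℕ) j : ℕ) : ZMod p))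
          = (0 : Fin n → ZMod p) := by
        funext j
        simp [nsmul_eq_mul, ZMod.natCast_self]
      rw [this, Submodule.Quotient.mk_zero]
  exact fun f hf => hker hf

theorem aux_key_phi (p n : ℕ) [NeZero p] (K : Type*) [Field K]
    (C : Submodule (ZMod p) (Fin n → ZMod p)) (s : MvPolynomial (Fin n) K)
    (u : Fin n →₀ ℕ) (hI : monomial u (1 : K) - s ∈ codeIdeal p K C) :
    ∃ v ∈ s.support,
      (fun i => ((v i : ℕ) : ZMod p)) - (fun i => ((u i : ℕ) : ZMod p)) ∈ C := by
  classical
  by_contra hcon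
  push_neg at hcon
  have h0 : auxPhi p n K C (monomial u 1) = auxPhi p n K C s := by
    have := auxPhi_codeIdeal p n K C _ hI
    rwa [map_sub, sub_eq_zero] at this
  rw [auxPhi_monomial] at h0
  have hs : auxPhi p n K C s
      = ∑ v ∈ s.support, AddMonoidAlgebra.single (auxRedHom p n C v) (coeff v s) := by
    conv_lhs => rw [s.as_sum]
    rw [map_sum]
    exact Finset.sum_congr rfl fun v _ => auxPhi_monomial p n K C v _
  rw [hs] at h0
  have h0' : (Finsupp.single (auxRedHom p n C u) (1 : K) : ((Fin n → ZMod p) ⧸ C) →₀ K)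
      = ∑ v ∈ s.support, Finsupp.single (auxRedHom p n C v) (coeff v s) := by
    have := congrArg AddMonoidAlgebra.coeff h0
    simpa only [AddMonoidAlgebra.coeff_single, AddMonoidAlgebra.coeff_sum] using this
  have h1 := DFunLike.congr_fun h0' (auxRedHom p n C u)
  rw [Finsupp.single_eq_same, Finsupp.finset_sum_apply] at h1
  have h2 : ∀ v ∈ s.support,
      (Finsupp.single (auxRedHom p n C v) (coeff v s)) (auxRedHom p n C u) = 0 := by
    intro v hv
    rw [Finsupp.single_apply, if_neg]
    intro heq
    exact hcon v hv ((Submodule.Quotient.eq C).1 heq)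
  rw [Finset.sum_congr rfl h2, Finset.sum_const_zero] at h1
  exact one_ne_zero h1

theorem aux_normal_form (p : ℕ) (K : Type*) [Field K] {n : ℕ}
    (C : Submodule (ZMod p) (Fin n → ZMod p))
    (le : (Fin n →₀ ℕ) → (Fin n →₀ ℕ) → Prop)
    (htrans : Transitive le) (hantisymm : AntiSymmetric le)
    (hzero : ∀ a : Fin n →₀ ℕ, le 0 a)
    (hadd : ∀ a b c : Fin n →₀ ℕ, le a b → le (a + c) (b + c)) :
    ∀ u : Fin n →₀ ℕ, ∃ s : MvPolynomial (Fin n) K,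
      monomial u (1 : K) - s ∈ codeIdeal p K C ∧
      ∀ v ∈ s.support, monomial v (1 : K) ∉ leadIdeal le (codeIdeal p K C) := by
  classical
  intro u
  refine (aux_lt_wf le htrans hantisymm hzero hadd).induction
    (C := fun u => ∃ s : MvPolynomial (Fin n) K,
      monomial u (1 : K) - s ∈ codeIdeal p K C ∧
      ∀ v ∈ s.support, monomial v (1 : K) ∉ leadIdeal le (codeIdeal p K C)) u ?_
  clear u
  intro u IH
  by_cases hu : monomial u (1 : K) ∈ leadIdeal le (codeIdeal p K C)
  · obtain ⟨f, hfI, d, ⟨hdsupp, hdmax⟩, hdu⟩ := aux_mem_leadIdeal le _ u hu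
    set c := coeff d f with hc
    have hc0 : c ≠ 0 := mem_support_iff.1 hdsupp
    set g := monomial (u - d) (c⁻¹) * f with hg
    have hgI : g ∈ codeIdeal p K C := Ideal.mul_mem_left _ _ hfI
    set h := monomial u (1 : K) - g with hh
    have hud : u - d + d = u := tsub_add_cancel_of_le hdu
    have hcoeffgu : coeff u g = 1 := by
      have h1 : coeff (u - d + d) g = c⁻¹ * coeff d f := by
        rw [hg]; exact coeff_monomial_mul _ _ _ _
      rw [hud] at h1
      rw [h1, inv_mul_cancel₀ hc0]
    have hhu : coeff u h = 0 := by
      rw [hh, coeff_sub, hcoeffgu, coeff_monomial, if_pos rfl, sub_self]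
    have hsupph : ∀ e ∈ h.support, le e u ∧ e ≠ u := by
      intro e he
      have hne : e ≠ u := by
        intro h'
        rw [h'] at he
        exact (mem_support_iff.1 he) hhu
      refine ⟨?_, hne⟩
      have hcup := support_sub (σ := Fin n) (monomial u (1 : K)) g he
      rcases Finset.mem_union.1 hcup with hmem | hmem
      · exfalso
        exact hne ((Finset.mem_singleton.1 (support_monomial_subset hmem)))
      · have hmul := support_mul (monomial (u - d) (c⁻¹ : K)) f hmem
        rw [Finset.mem_add] at hmul
        obtain ⟨m', hm', e₀, he₀, rfl⟩ := hmul
        have hm'd : m' = u - d := Finset.mem_singleton.1 (support_monomial_subset hm')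
        subst hm'd
        have := hadd e₀ d (u - d) (hdmax e₀ he₀)
        rwa [add_comm e₀ (u - d), add_comm d (u - d), hud] at this
    have H : ∀ e ∈ h.support, ∃ s' : MvPolynomial (Fin n) K,
        monomial e (1 : K) - s' ∈ codeIdeal p K C ∧
        ∀ v ∈ s'.support, monomial v (1 : K) ∉ leadIdeal le (codeIdeal p K C) :=
      fun e he => IH e (hsupph e he)
    choose! t htI hts using H
    refine ⟨∑ e ∈ h.support, coeff e h • t e, ?_, ?_⟩
    · have hsplit : monomial u (1 : K) - ∑ e ∈ h.support, coeff e h • t e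
          = g + (h - ∑ e ∈ h.support, coeff e h • t e) := by
        rw [hh]; ring
      rw [hsplit]
      refine Ideal.add_mem _ hgI ?_
      have hterm : ∀ e ∈ h.support,
          MvPolynomial.C (coeff e h) * (monomial e (1 : K) - t e)
            = monomial e (coeff e h) - coeff e h • t e := fun e _ => by
        rw [mul_sub, C_mul_monomial, mul_one, smul_eq_C_mul]
      have hhs : h - ∑ e ∈ h.support, coeff e h • t e
          = ∑ e ∈ h.support, MvPolynomial.C (coeff e h) * (monomial e (1 : K) - t e) := by
        rw [Finset.sum_congr rfl hterm, Finset.sum_sub_distrib, ← h.as_sum]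
      rw [hhs]
      exact Ideal.sum_mem _ fun e he => Ideal.mul_mem_left _ _ (htI e he)
    · intro v hv
      have := support_sum hv
      rw [Finset.mem_biUnion] at this
      obtain ⟨e, he, hv'⟩ := this
      exact hts e he v (support_smul hv')
  · refine ⟨monomial u (1 : K), by simp, ?_⟩
    intro v hv
    have : v = u := Finset.mem_singleton.1 (support_monomial_subset hv)
    rwa [this]

/-- for any monomial order, the standard monomials of I(C) are in
bijection with the cosets of F_p^n / C: each coset contains the exponent of
exactly one standard monomial. -/
theorem stmt_16 (p : ℕ) (hp : p.Prime) (K : Type*) [Field K] (n : ℕ)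
    (C : Submodule (ZMod p) (Fin n → ZMod p))
    (le : (Fin n →₀ ℕ) → (Fin n →₀ ℕ) → Prop)
    (hrefl : Reflexive le) (htrans : Transitive le)
    (hantisymm : AntiSymmetric le) (htotal : Total le)
    (hzero : ∀ a : Fin n →₀ ℕ, le 0 a)
    (hadd : ∀ a b c : Fin n →₀ ℕ, le a b → le (a + c) (b + c)) :
    ∀ w : Fin n → ZMod p,
      ∃! u : Fin n →₀ ℕ,
        monomial u (1 : K) ∉ leadIdeal le (codeIdeal p K C) ∧
          (fun i => ((u i : ZMod p))) - w ∈ C := by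
  haveI : NeZero p := ⟨hp.ne_zero⟩
  intro w
  obtain ⟨s, hsI, hstd⟩ := aux_normal_form p K C le htrans hantisymm hzero hadd (toExp w)
  obtain ⟨v, hvs, hvC⟩ := aux_key_phi p n K C s (toExp w) hsI
  have hw : (fun i => (((toExp w) i : ℕ) : ZMod p)) = w := by
    funext i
    simp [toExp, ZMod.natCast_val, ZMod.cast_id]
  rw [hw] at hvC
  refine ⟨v, ⟨hstd v hvs, hvC⟩, ?_⟩
  rintro y ⟨hy1, hy2⟩
  by_contra hne
  have hyv : (fun i => ((y i : ℕ) : ZMod p)) - (fun i => ((v i : ℕ) : ZMod p)) ∈ C := by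
    have h := C.sub_mem hy2 hvC
    rwa [sub_sub_sub_cancel_right] at h
  have hvy : (fun i => ((v i : ℕ) : ZMod p)) - (fun i => ((y i : ℕ) : ZMod p)) ∈ C := by
    have h := C.neg_mem hyv
    rwa [neg_sub] at h
  rcases htotal y v with hle' | hle'
  · exact hstd v hvs (aux_two_term p K C le hrefl v y hle' hne hvy)
  · exact hy1 (aux_two_term p K C le hrefl y v hle' (Ne.symm hne) hyv)
end
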